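/- Let k : ℕ and let R ⊆ (Fin k → ℚ) be automorphism-closed and preserved by some ll operation. Then R is preserved by every lex operation. -/

import Mathlib

/-- A lex operation on ℚ. -/
def IsLex (f : ℚ → ℚ → ℚ) : Prop :=
  ∀ a a' b b' : ℚ, f a b < f a' b' ↔ (a < a' ∨ (a = a' ∧ b < b'))

/-- An ll operation on ℚ. -/
def IsLL (f : ℚ → ℚ → ℚ) : Prop :=
  ∀ a a' b b' : ℚ, f a b < f a' b' ↔
    ((a ≤ 0 ∧ a < a') ∨ (a = a' ∧ a ≤ 0 ∧ b < b') ∨ (0 < a ∧ 0 < a' ∧ b < b'))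

/-- A relation `R ⊆ (Fin k → ℚ)` is preserved by `f : ℚ → ℚ → ℚ`. -/
def Preserves {k : ℕ} (f : ℚ → ℚ → ℚ) (R : Set (Fin k → ℚ)) : Prop :=
  ∀ s ∈ R, ∀ t ∈ R, (fun j => f (s j) (t j)) ∈ R

/-- A relation is closed under all order-automorphisms of ℚ. -/
def AutoClosed {k : ℕ} (R : Set (Fin k → ℚ)) : Prop :=
  ∀ t ∈ R, ∀ α : ℚ → ℚ, StrictMono α → Function.Bijective α → (fun j => α (t j)) ∈ R

open Function


private def affQ (p q r : ℚ) : ℚ → ℚ := fun x => p + r * (x - q)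

private lemma affQ_mono {p q r : ℚ} (hr : 0 < r) : StrictMono (affQ p q r) := by
  intro x y hxy
  have := mul_lt_mul_of_pos_left (sub_lt_sub_right hxy q) hr
  simp only [affQ]
  linarith

private lemma affQ_surj {p q r : ℚ} (hr : 0 < r) : Surjective (affQ p q r) := by
  intro z
  refine ⟨q + (z - p) / r, ?_⟩
  simp only [affQ]
  field_simp
  ring

private def glueQ (α β : ℚ → ℚ) (c : ℚ) : ℚ → ℚ := fun x => if x ≤ c then α x else β x

private lemma glueQ_mono {α β : ℚ → ℚ} {c : ℚ} (hα : StrictMono α) (hβ : StrictMono β)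
    (hc : α c = β c) : StrictMono (glueQ α β c) := by
  intro x y hxy
  unfold glueQ
  by_cases hx : x ≤ c <;> by_cases hy : y ≤ c <;> simp only [hx, hy, if_true, if_false]
  · exact hα hxy
  · calc α x ≤ α c := hα.monotone hx
      _ = β c := hc
      _ < β y := hβ (lt_of_not_ge hy)
  · exact absurd (hxy.le.trans hy) hx
  · exact hβ hxy

private lemma glueQ_surj {α β : ℚ → ℚ} {c : ℚ} (hα : StrictMono α) (hβ : StrictMono β)
    (hαs : Surjective α) (hβs : Surjective β) (hc : α c = β c) : Surjective (glueQ α β c) := by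
  intro z
  by_cases hz : z ≤ α c
  · obtain ⟨x, hx⟩ := hαs z
    have hxc : x ≤ c := hα.le_iff_le.mp (by rw [hx]; exact hz)
    exact ⟨x, by simp [glueQ, hxc, hx]⟩
  · obtain ⟨x, hx⟩ := hβs z
    have hxc : ¬ x ≤ c := by
      intro h
      have h2 : β x ≤ β c := hβ.monotone h
      rw [hx, ← hc] at h2
      exact hz h2
    exact ⟨x, by simp [glueQ, hxc, hx]⟩

private lemma exists_auto_sorted : ∀ (n : ℕ) (a b : Fin n → ℚ), StrictMono a → StrictMono b →
    ∃ α : ℚ → ℚ, StrictMono α ∧ Surjective α ∧ ∀ i, α (a i) = b i := by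
  intro n
  induction n with
  | zero => exact fun a b _ _ => ⟨id, strictMono_id, surjective_id, fun i => i.elim0⟩
  | succ n ih =>
    intro a b ha hb
    cases n with
    | zero =>
      refine ⟨affQ (b 0) (a 0) 1, affQ_mono one_pos, affQ_surj one_pos, ?_⟩
      intro i
      fin_cases i
      simp [affQ]
    | succ m =>
      obtain ⟨α, hαm, hαs, hαv⟩ := ih (a ∘ Fin.castSucc) (b ∘ Fin.castSucc)
        (fun i j hij => ha (Fin.castSucc_lt_castSucc_iff.mpr hij))
        (fun i j hij => hb (Fin.castSucc_lt_castSucc_iff.mpr hij))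
      set A1 := a (Fin.castSucc (Fin.last m)) with hA1
      set A2 := a (Fin.last (m + 1)) with hA2
      set B1 := b (Fin.castSucc (Fin.last m)) with hB1
      set B2 := b (Fin.last (m + 1)) with hB2
      have hA : A1 < A2 := ha (Fin.castSucc_lt_last _)
      have hB : B1 < B2 := hb (Fin.castSucc_lt_last _)
      have hd : (0:ℚ) < A2 - A1 := by linarith
      set r : ℚ := (B2 - B1) / (A2 - A1) with hr
      have hrpos : 0 < r := div_pos (by linarith) hd
      set mid := affQ B1 A1 r with hmid
      set top := affQ B2 A2 1 with htop
      have hmt : mid A2 = top A2 := by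
        simp only [hmid, htop, affQ, hr]
        rw [div_mul_cancel₀ _ (ne_of_gt hd)]
        ring
      set inner := glueQ mid top A2 with hinner
      have hinm : StrictMono inner := glueQ_mono (affQ_mono hrpos) (affQ_mono one_pos) hmt
      have hins : Surjective inner := glueQ_surj (affQ_mono hrpos) (affQ_mono one_pos)
        (affQ_surj hrpos) (affQ_surj one_pos) hmt
      have hαA1 : α A1 = B1 := hαv (Fin.last m)
      have hinA1 : inner A1 = B1 := by
        simp only [hinner, glueQ, if_pos hA.le, hmid, affQ]
        ring
      have hglue : α A1 = inner A1 := by rw [hαA1, hinA1]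
      refine ⟨glueQ α inner A1, glueQ_mono hαm hinm hglue,
        glueQ_surj hαm hinm hαs hins hglue, ?_⟩
      intro i
      refine Fin.lastCases ?_ ?_ i
      · have h1 : ¬ a (Fin.last (m + 1)) ≤ A1 := not_le.mpr hA
        simp only [glueQ, ← hA2, if_neg h1, hinner, if_pos le_rfl, hmid, affQ, hr]
        rw [div_mul_cancel₀ _ (ne_of_gt hd)]
        rw [if_neg (not_le.mpr hA), hB2]
        ring
      · intro j
        have h1 : a (Fin.castSucc j) ≤ A1 :=
          ha.monotone (Fin.castSucc_le_castSucc_iff.mpr (Fin.le_last j))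
        simp only [glueQ, if_pos h1]
        exact hαv j

private lemma exists_auto_map {k : ℕ} (u v : Fin k → ℚ)
    (h : ∀ i j, u i < u j ↔ v i < v j) :
    ∃ α : ℚ → ℚ, StrictMono α ∧ Bijective α ∧ ∀ j, α (u j) = v j := by
  classical
  have heq : ∀ p q : Fin k, u p = u q → v p = v q := by
    intro p q hpq
    have h1 : ¬ v p < v q := fun hc => absurd ((h p q).mpr hc) (by simp [hpq])
    have h2 : ¬ v q < v p := fun hc => absurd ((h q p).mpr hc) (by simp [hpq])
    exact le_antisymm (not_lt.1 h2) (not_lt.1 h1)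
  set S : Finset ℚ := Finset.image u Finset.univ with hS
  set e := S.orderIsoOfFin rfl with he
  set a : Fin S.card → ℚ := fun i => (e i : ℚ) with ha
  have hamono : StrictMono a := fun i j hij => Subtype.coe_lt_coe.mpr (e.strictMono hij)
  have hmem : ∀ i : Fin S.card, ∃ j : Fin k, u j = a i := by
    intro i
    have : (a i) ∈ S := (e i).2
    rw [hS, Finset.mem_image] at this
    obtain ⟨j, _, hj⟩ := this
    exact ⟨j, hj⟩
  choose w hw using hmem
  set b : Fin S.card → ℚ := fun i => v (w i) with hb
  have hbmono : StrictMono b := by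
    intro i j hij
    have : u (w i) < u (w j) := by rw [hw i, hw j]; exact hamono hij
    exact (h _ _).mp this
  obtain ⟨α, hm, hs, hv⟩ := exists_auto_sorted S.card a b hamono hbmono
  refine ⟨α, hm, ⟨hm.injective, hs⟩, ?_⟩
  intro j
  have hjS : u j ∈ S := by rw [hS]; exact Finset.mem_image_of_mem u (Finset.mem_univ j)
  set i := e.symm ⟨u j, hjS⟩ with hi
  have hai : a i = u j := by rw [ha]; simp [hi]
  have : α (a i) = b i := hv i
  rw [hai] at this
  rw [this, hb]
  exact heq (w i) j (by rw [hw i, hai])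

/-- An automorphism-closed relation preserved by some ll operation is preserved by every
lex operation. -/
theorem lex_preserved_of_ll_closed (k : ℕ) (R : Set (Fin k → ℚ))
    (hauto : AutoClosed R) (f : ℚ → ℚ → ℚ) (hf : IsLL f) (hR : Preserves f R) :
    ∀ g : ℚ → ℚ → ℚ, IsLex g → Preserves g R := by
  intro g hg s hs t ht
  classical
  obtain ⟨c, hc⟩ : ∃ c : ℚ, ∀ j, s j ≤ c := Finite.exists_le s
  set s' : Fin k → ℚ := fun j => s j - (c + 1) with hs'def
  have hs'R : s' ∈ R := hauto s hs (fun x => x - (c + 1))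
    (fun x y hxy => by simpa using sub_lt_sub_right hxy (c + 1))
    ⟨fun x y hxy => by simpa using hxy, fun z => ⟨z + (c + 1), by ring⟩⟩
  have hs'neg : ∀ j, s' j ≤ 0 := by
    intro j
    have := hc j
    simp only [hs'def]
    linarith
  set u : Fin k → ℚ := fun j => f (s' j) (t j) with hudef
  have huR : u ∈ R := hR s' hs'R t ht
  set v : Fin k → ℚ := fun j => g (s j) (t j) with hvdef
  have key : ∀ i j : Fin k, u i < u j ↔ v i < v j := by
    intro i j
    rw [hudef, hvdef]
    simp only
    rw [hf, hg]
    have hi := hs'neg i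
    have hj := hs'neg j
    constructor
    · rintro (⟨_, h'⟩ | ⟨h', _, h''⟩ | ⟨h', _, _⟩)
      · left
        simp only [hs'def] at h'
        linarith
      · right
        constructor
        · simp only [hs'def] at h'
          linarith
        · exact h''
      · exfalso; linarith
    · rintro (h' | ⟨h', h''⟩)
      · exact Or.inl ⟨hi, by simp only [hs'def]; linarith⟩
      · exact Or.inr (Or.inl ⟨by simp only [hs'def]; rw [h'], hi, h''⟩)
  obtain ⟨α, hm, hb, hval⟩ := exists_auto_map u v key
  have := hauto u huR α hm hb
  have heq : (fun j => α (u j)) = fun j => g (s j) (t j) := by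
    funext j
    rw [hval j, hvdef]
  rwa [heq] at this
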